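/- Let A be a 2^n × 2^n real matrix and b ∈ ℝ^{2^n}, partitioned into m×m blocks A_{ij} ∈ ℝ^{d×d} and subvectors b_i ∈ ℝ^d with b_i = Σ_j b_{ij}. Suppose the row- and column-neighbor graphs are connected with Laplacian L and L̄ = L ⊗ I_d. Then x* is a least squares solution of Ax = b if and only if there exist z_1*,…,z_m* ∈ ℝ^{md} such that (x*, {z_i*}) minimizes F(x, {z_i}) = Σ_{i=1}^m ‖Ā_i x − b̄_i − L̄ z_i‖². -/

import Mathlib

open Kronecker

open Finset Module Matrix

lemma lap_col_sum {m : ℕ} (G : SimpleGraph (Fin m)) [DecidableRel G.Adj] (k : Fin m) :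
    ∑ j : Fin m, G.lapMatrix ℝ j k = 0 := by
  have h := congrFun (G.lapMatrix_mulVec_const_eq_zero (R := ℝ)) k
  simp only [Matrix.mulVec, dotProduct, mul_one, Pi.zero_apply] at h
  calc ∑ j : Fin m, G.lapMatrix ℝ j k = ∑ j : Fin m, G.lapMatrix ℝ k j := by
        exact Finset.sum_congr rfl fun j _ => (G.isSymm_lapMatrix (R := ℝ)).apply k j
    _ = 0 := h

lemma lap_surj {m : ℕ} (G : SimpleGraph (Fin m)) [DecidableRel G.Adj]
    (hG : G.Connected) (w : Fin m → ℝ) (hw : ∑ j, w j = 0) :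
    ∃ y : Fin m → ℝ, G.lapMatrix ℝ *ᵥ y = w := by
  classical
  have hm : 0 < m := Fin.pos_iff_nonempty.mpr hG.nonempty
  set f := Matrix.toLin' (G.lapMatrix ℝ) with hf
  let s : (Fin m → ℝ) →ₗ[ℝ] ℝ :=
    { toFun := fun v => ∑ j, v j
      map_add' := fun u v => by simp [Finset.sum_add_distrib]
      map_smul' := fun c v => by simp [Finset.mul_sum] }
  have hssurj : Function.Surjective s := by
    intro r
    exact ⟨Pi.single ⟨0, hm⟩ r, by simp [s, Finset.sum_pi_single]⟩
  have hrange_s : LinearMap.range s = ⊤ := LinearMap.range_eq_top.mpr hssurj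
  have hks : finrank ℝ (LinearMap.ker s) = m - 1 := by
    have h1 := LinearMap.finrank_range_add_finrank_ker s
    rw [hrange_s] at h1
    simp only [finrank_top, finrank_self] at h1
    have h2 : finrank ℝ (Fin m → ℝ) = m := by simp
    omega
  have hcard : Fintype.card G.ConnectedComponent = 1 := by
    refine Fintype.card_eq_one_iff.mpr ⟨G.connectedComponentMk ⟨0, hm⟩, ?_⟩
    intro c
    refine c.ind fun v => ?_
    exact SimpleGraph.ConnectedComponent.eq.mpr (hG.preconnected v ⟨0, hm⟩)
  have hkf : finrank ℝ (LinearMap.ker f) = 1 := by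
    rw [← SimpleGraph.card_connectedComponent_eq_finrank_ker_toLin'_lapMatrix, hcard]
  have hrf : finrank ℝ (LinearMap.range f) = m - 1 := by
    have h1 := LinearMap.finrank_range_add_finrank_ker f
    have h2 : finrank ℝ (Fin m → ℝ) = m := by simp
    omega
  have hle : LinearMap.range f ≤ LinearMap.ker s := by
    rintro v ⟨y, rfl⟩
    show ∑ j, f y j = 0
    have : ∀ j, f y j = ∑ k, G.lapMatrix ℝ j k * y k := by
      intro j; rw [hf, Matrix.toLin'_apply]; rfl
    simp_rw [this]
    rw [Finset.sum_comm]
    simp_rw [← Finset.sum_mul]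
    simp [lap_col_sum G]
  have heq : LinearMap.range f = LinearMap.ker s :=
    Submodule.eq_of_le_of_finrank_le hle (by omega)
  have hwmem : w ∈ LinearMap.ker s := hw
  rw [← heq] at hwmem
  obtain ⟨y, hy⟩ := hwmem
  exact ⟨y, by rw [← hy, hf, Matrix.toLin'_apply]⟩

/-- Lemma 1: `x*` is a least squares solution of `Ax = b` if and only if there exist
`z₁*,…,z_m*` such that `(x*, {z_i*})` minimizes `F(x,{z_i}) = Σᵢ ‖Āᵢ x − b̄ᵢ − L̄ zᵢ‖²`,
where `A` is partitioned into `m×m` blocks of size `d×d`, `Āᵢ = diag(A_{i1},…,A_{im})`,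
`b̄ᵢ` stacks the `b_{ij}` with `Σⱼ b_{ij} = bᵢ`, and `L̄ = L ⊗ I_d` for the Laplacian
`L` of the connected row-neighbor graph (squared Euclidean norms written as sums). -/
theorem leastSquares_iff_min_distributed (m d : ℕ)
    (Grow Gcol : SimpleGraph (Fin m)) [DecidableRel Grow.Adj] [DecidableRel Gcol.Adj]
    (hrow : Grow.Connected) (hcol : Gcol.Connected)
    (A : Matrix (Fin m × Fin d) (Fin m × Fin d) ℝ)
    (b : Fin m × Fin d → ℝ) (bb : Fin m → Fin m → Fin d → ℝ)
    (hb : ∀ i r, ∑ j : Fin m, bb i j r = b (i, r))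
    (Lbar : Matrix (Fin m × Fin d) (Fin m × Fin d) ℝ)
    (hLbar : Lbar = (Grow.lapMatrix ℝ) ⊗ₖ (1 : Matrix (Fin d) (Fin d) ℝ))
    (Abar : Fin m → Matrix (Fin m × Fin d) (Fin m × Fin d) ℝ)
    (hAbar : ∀ i p q, Abar i p q = if p.1 = q.1 then A (i, p.2) (p.1, q.2) else 0)
    (F : (Fin m × Fin d → ℝ) → (Fin m → Fin m × Fin d → ℝ) → ℝ)
    (hF : ∀ x z, F x z = ∑ i : Fin m, ∑ p : Fin m × Fin d,
      ((Abar i).mulVec x p - bb i p.1 p.2 - Lbar.mulVec (z i) p) ^ 2)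
    (xs : Fin m × Fin d → ℝ) :
    (∀ x : Fin m × Fin d → ℝ,
        ∑ p, (A.mulVec xs p - b p) ^ 2 ≤ ∑ p, (A.mulVec x p - b p) ^ 2) ↔
      (∃ zs : Fin m → Fin m × Fin d → ℝ,
        ∀ (x : Fin m × Fin d → ℝ) (z : Fin m → Fin m × Fin d → ℝ),
          F xs zs ≤ F x z) := by
  classical
  have hm : 0 < m := Fin.pos_iff_nonempty.mpr hrow.nonempty
  have hmR : (0:ℝ) < (m:ℝ) := by exact_mod_cast hm
  -- Lbar acting coordinate-wise
  have hLv : ∀ (z : Fin m × Fin d → ℝ) (j : Fin m) (s : Fin d),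
      Lbar.mulVec z (j, s) = ∑ k, Grow.lapMatrix ℝ j k * z (k, s) := by
    intro z j s
    rw [hLbar]
    simp only [Matrix.mulVec, dotProduct]
    rw [Fintype.sum_prod_type]
    refine Finset.sum_congr rfl fun k _ => ?_
    simp [Matrix.kroneckerMap_apply, Matrix.one_apply, mul_ite, ite_mul, mul_assoc]
  -- block-row sums of Abar
  have hAv : ∀ (x : Fin m × Fin d → ℝ) (i : Fin m) (s : Fin d),
      ∑ j, (Abar i).mulVec x (j, s) = A.mulVec x (i, s) := by
    intro x i s
    have h1 : ∀ j : Fin m, (Abar i).mulVec x (j, s)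
        = ∑ s' : Fin d, A (i, s) (j, s') * x (j, s') := by
      intro j
      simp only [Matrix.mulVec, dotProduct]
      rw [Fintype.sum_prod_type]
      rw [Finset.sum_eq_single j]
      · refine Finset.sum_congr rfl fun s' _ => ?_
        rw [hAbar]; simp
      · intro k _ hk
        apply Finset.sum_eq_zero
        intro s' _
        rw [hAbar]
        simp [Ne.symm hk]
      · simp
    simp_rw [h1]
    rw [Matrix.mulVec, dotProduct, Fintype.sum_prod_type]
  -- sums of Lbar applied vanish
  have hLzero : ∀ (z : Fin m × Fin d → ℝ) (s : Fin d),
      ∑ j, Lbar.mulVec z (j, s) = 0 := by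
    intro z s
    simp_rw [hLv]
    rw [Finset.sum_comm]
    simp_rw [← Finset.sum_mul]
    simp [lap_col_sum Grow]
  -- sum of residuals
  have hVsum : ∀ (x : Fin m × Fin d → ℝ) (z : Fin m × Fin d → ℝ) (i : Fin m) (s : Fin d),
      ∑ j, ((Abar i).mulVec x (j, s) - bb i j s - Lbar.mulVec z (j, s))
        = A.mulVec x (i, s) - b (i, s) := by
    intro x z i s
    rw [Finset.sum_sub_distrib, Finset.sum_sub_distrib, hAv, hb, hLzero]
    ring
  -- lower bound
  have hlow : ∀ x z, (∑ p, (A.mulVec x p - b p) ^ 2) ≤ (m:ℝ) * F x z := by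
    intro x z
    rw [hF, Finset.mul_sum, Fintype.sum_prod_type]
    refine Finset.sum_le_sum fun i _ => ?_
    have hsw : ∑ p : Fin m × Fin d,
        ((Abar i).mulVec x p - bb i p.1 p.2 - Lbar.mulVec (z i) p) ^ 2
        = ∑ s : Fin d, ∑ j : Fin m,
          ((Abar i).mulVec x (j, s) - bb i j s - Lbar.mulVec (z i) (j, s)) ^ 2 := by
      rw [Fintype.sum_prod_type]
      exact Finset.sum_comm
    rw [hsw, Finset.mul_sum]
    refine Finset.sum_le_sum fun s _ => ?_
    have hcs := sq_sum_le_card_mul_sum_sq (s := (Finset.univ : Finset (Fin m)))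
      (f := fun j => (Abar i).mulVec x (j, s) - bb i j s - Lbar.mulVec (z i) (j, s))
    rw [hVsum x (z i) i s] at hcs
    simpa using hcs
  -- attainment
  have hopt : ∀ x, ∃ z, (m:ℝ) * F x z = ∑ p, (A.mulVec x p - b p) ^ 2 := by
    intro x
    have hex : ∀ (i : Fin m) (s : Fin d), ∃ y : Fin m → ℝ,
        Grow.lapMatrix ℝ *ᵥ y
          = fun j => ((Abar i).mulVec x (j, s) - bb i j s)
              - (A.mulVec x (i, s) - b (i, s)) / m := by
      intro i s
      apply lap_surj Grow hrow
      rw [Finset.sum_sub_distrib, Finset.sum_sub_distrib, hAv, hb]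
      rw [Finset.sum_const, Finset.card_univ, Fintype.card_fin, nsmul_eq_mul]
      field_simp
      ring
    choose y hy using hex
    refine ⟨fun i p => y i p.2 p.1, ?_⟩
    have ht : ∀ (i j : Fin m) (s : Fin d),
        (Abar i).mulVec x (j, s) - bb i j s
          - Lbar.mulVec (fun p => y i p.2 p.1) (j, s)
        = (A.mulVec x (i, s) - b (i, s)) / m := by
      intro i j s
      have h2 := congrFun (hy i s) j
      have h3 : (Grow.lapMatrix ℝ *ᵥ y i s) j = ∑ k, Grow.lapMatrix ℝ j k * y i s k := rfl
      rw [hLv]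
      rw [h3] at h2
      simp only [] at h2 ⊢
      linarith [h2]
    rw [hF]
    have h4 : ∀ i : Fin m, ∑ p : Fin m × Fin d,
        ((Abar i).mulVec x p - bb i p.1 p.2 - Lbar.mulVec (fun p => y i p.2 p.1) p) ^ 2
        = (m:ℝ) * ∑ s : Fin d, ((A.mulVec x (i, s) - b (i, s)) / m) ^ 2 := by
      intro i
      rw [Fintype.sum_prod_type]
      have : ∀ j : Fin m, ∑ s : Fin d,
          ((Abar i).mulVec x (j, s) - bb i j s
            - Lbar.mulVec (fun p => y i p.2 p.1) (j, s)) ^ 2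
          = ∑ s : Fin d, ((A.mulVec x (i, s) - b (i, s)) / m) ^ 2 := by
        intro j
        exact Finset.sum_congr rfl fun s _ => by rw [ht i j s]
      simp_rw [this]
      rw [Finset.sum_const, Finset.card_univ, Fintype.card_fin, nsmul_eq_mul]
    simp_rw [h4]
    rw [Fintype.sum_prod_type, ← Finset.mul_sum, ← mul_assoc]
    rw [Finset.mul_sum]
    refine Finset.sum_congr rfl fun i _ => ?_
    rw [Finset.mul_sum]
    refine Finset.sum_congr rfl fun s _ => ?_
    field_simp
  constructor
  · intro h
    obtain ⟨zs, hzs⟩ := hopt xs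
    refine ⟨zs, fun x z => ?_⟩
    have h1 : (m:ℝ) * F xs zs ≤ (m:ℝ) * F x z := by
      calc (m:ℝ) * F xs zs = ∑ p, (A.mulVec xs p - b p) ^ 2 := hzs
        _ ≤ ∑ p, (A.mulVec x p - b p) ^ 2 := h x
        _ ≤ (m:ℝ) * F x z := hlow x z
    exact le_of_mul_le_mul_left h1 hmR
  · rintro ⟨zs, hzs⟩ x
    obtain ⟨z, hz⟩ := hopt x
    calc ∑ p, (A.mulVec xs p - b p) ^ 2 ≤ (m:ℝ) * F xs zs := hlow xs zs
      _ ≤ (m:ℝ) * F x z := mul_le_mul_of_nonneg_left (hzs x z) hmR.le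
      _ = ∑ p, (A.mulVec x p - b p) ^ 2 := hz
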